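/- arXiv:1307.3532 — 2 statements merged into one kernel-verified Lean document; each statement's English description precedes it below -/
import Mathlib

section
/- Let d ≥ 1 and f, g ∈ ℛ_d. The following are equivalent: (a) ann_R(f)_e ⊆ ann_R(g)_e for all e < d; (b) ann_R(f)_{d−1} ⊆ ann_R(g)_{d−1}; (c) there exists a matrix A ∈ Mat_r(K) such that ∂_i g = (A∂)_i(f) for all i = 1,…,r; (d) R_1·ann_R(f)_{d−1} ⊆ ann_R(g)_d; (e) 𝔪_R·ann_R(f) ⊆ ann_R(g), where 𝔪_R = (∂_1,…,∂_r). -/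
open MvPolynomial

namespace Kleppe

noncomputable section

open scoped Classical

variable {K : Type*}

/-- The iterated partial-derivative operator `∂^β` applied to `f`
(in the standard polynomial ring; char 0 identification of divided powers). -/
def derivMulti [CommSemiring K] {r : ℕ} (β : Fin r →₀ ℕ) (f : MvPolynomial (Fin r) K) :
    MvPolynomial (Fin r) K :=
  ∑ α ∈ f.support,
    if β ≤ α then
      MvPolynomial.monomial (α - β)
        ((∏ i : Fin r, (α i).descFactorial (β i)) • MvPolynomial.coeff α f)
    else 0

/-- The apolarity action `D(f)` of a differential operator `D ∈ R = K[∂_1,…,∂_r]`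
on a polynomial `f ∈ ℛ = K[x_1,…,x_r]`; `∂_i` acts as `∂/∂x_i`. -/
def contract [CommSemiring K] {r : ℕ} (D f : MvPolynomial (Fin r) K) :
    MvPolynomial (Fin r) K :=
  ∑ β ∈ D.support, MvPolynomial.coeff β D • derivMulti β f

/-- `(A∂)_i = Σ_k A_{ik} ∂_k`, as an element of `R`. -/
def rowOp [CommSemiring K] {r : ℕ} (A : Matrix (Fin r) (Fin r) K) (i : Fin r) :
    MvPolynomial (Fin r) K :=
  ∑ k : Fin r, A i k • X k

/-- The matrix space `M_f = {A | ∂_i·(A∂)_j − ∂_j·(A∂)_i ∈ ann_R f for all i,j}`. -/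
def Mf [CommRing K] {r : ℕ} (f : MvPolynomial (Fin r) K) :
    Set (Matrix (Fin r) (Fin r) K) :=
  {A | ∀ i j : Fin r, contract (X i * rowOp A j - X j * rowOp A i) f = 0}

/-- `γ_f(A)`: the unique homogeneous `g` of degree `d` with `∂_i g = (A∂)_i (f)` for all `i`
(defined by choice; junk value `0` if no such `g` exists). -/
def gammaf [CommRing K] {r : ℕ} (d : ℕ) (f : MvPolynomial (Fin r) K)
    (A : Matrix (Fin r) (Fin r) K) : MvPolynomial (Fin r) K :=
  if h : ∃ g : MvPolynomial (Fin r) K, g.IsHomogeneous d ∧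
      ∀ i, contract (X i) g = contract (rowOp A i) f then h.choose else 0

/-- `R_e(g)`, the space of contractions of `g` by homogeneous operators of degree `e`. -/
def partials [CommRing K] {r : ℕ} (e : ℕ) (g : MvPolynomial (Fin r) K) :
    Submodule K (MvPolynomial (Fin r) K) :=
  Submodule.span K {p | ∃ D : MvPolynomial (Fin r) K, D.IsHomogeneous e ∧ p = contract D g}

/-- `G` is (the set of components of) a regular splitting of `f`:
`f = Σ_{g ∈ G} g`, each `g` a nonzero degree-`d` form, and the spaces of
`(d−1)`-st partials `R_{d−1}(g)` are independent. -/
def IsRegSplit [CommRing K] {r : ℕ} (d : ℕ) (f : MvPolynomial (Fin r) K)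
    (G : Set (MvPolynomial (Fin r) K)) : Prop :=
  G.Finite ∧ G.Nonempty ∧ (∀ g ∈ G, g ≠ 0 ∧ g.IsHomogeneous d) ∧ (∑ᶠ g ∈ G, g) = f ∧
  ∀ g ∈ G, Disjoint (partials (d - 1) g) (⨆ h ∈ G \ {g}, partials (d - 1) h)

/-- A complete set of orthogonal idempotents in `M_f`. -/
def IsCoid [CommRing K] {r : ℕ} (f : MvPolynomial (Fin r) K)
    (E : Set (Matrix (Fin r) (Fin r) K)) : Prop :=
  E.Finite ∧ E ⊆ Mf f ∧ (∀ A ∈ E, A ≠ 0) ∧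
  (∀ A ∈ E, ∀ B ∈ E, A ≠ B → A * B = 0) ∧ (∑ᶠ A ∈ E, A) = 1

end

noncomputable section
open scoped Classical
variable {K : Type*}

variable [CommSemiring K] {r : ℕ}

lemma coeff_derivMulti (β γ : Fin r →₀ ℕ) (f : MvPolynomial (Fin r) K) :
    coeff γ (derivMulti β f)
      = (∏ i : Fin r, (γ i + β i).descFactorial (β i)) • coeff (β + γ) f := by
  unfold derivMulti
  rw [MvPolynomial.coeff_sum]
  rw [Finset.sum_eq_single (β + γ)]
  · rw [if_pos le_self_add, add_tsub_cancel_left, coeff_monomial, if_pos rfl]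
    congr 1
    exact Finset.prod_congr rfl fun i _ => by rw [Finsupp.add_apply, add_comm]
  · intro α _ hne
    split_ifs with hle
    · rw [coeff_monomial, if_neg]
      intro hcon
      apply hne
      rw [← hcon]
      rw [add_tsub_cancel_of_le hle]
    · simp
  · intro hnot
    rw [MvPolynomial.notMem_support_iff] at hnot
    simp [hnot]

lemma degree_eq_weight_one' :
    (Finsupp.degree : (Fin r →₀ ℕ) →+ ℕ) = Finsupp.weight 1 :=
  Finsupp.degree_eq_weight_one

lemma contract_eq_sum (D f : MvPolynomial (Fin r) K) :
    contract D f = (AddMonoidAlgebra.coeff D).sum fun β c => c • derivMulti β f := rfl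

lemma desc_helper (a b c : ℕ) :
    (a + b).descFactorial b * (a + b + c).descFactorial c
      = (a + (c + b)).descFactorial (c + b) := by
  have h := Nat.descFactorial_mul_descFactorial (n := a + b + c) (k := c) (m := b + c) (by omega)
  rw [show a + b + c - c = a + b by omega, show b + c - c = b by omega] at h
  rw [show a + (c + b) = a + b + c by omega, show c + b = b + c by omega]
  exact h

lemma derivMulti_add_right (β : Fin r →₀ ℕ) (f g : MvPolynomial (Fin r) K) :
    derivMulti β (f + g) = derivMulti β f + derivMulti β g := by
  ext γ
  simp [coeff_derivMulti, smul_add]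

lemma derivMulti_smul_right (β : Fin r →₀ ℕ) (c : K) (f : MvPolynomial (Fin r) K) :
    derivMulti β (c • f) = c • derivMulti β f := by
  ext γ
  simp only [coeff_derivMulti, coeff_smul]
  rw [smul_comm]

lemma derivMulti_zero_right (β : Fin r →₀ ℕ) :
    derivMulti β (0 : MvPolynomial (Fin r) K) = 0 := by
  ext γ
  simp [coeff_derivMulti]

lemma derivMulti_comp (β δ : Fin r →₀ ℕ) (f : MvPolynomial (Fin r) K) :
    derivMulti β (derivMulti δ f) = derivMulti (δ + β) f := by
  ext γ
  rw [coeff_derivMulti, coeff_derivMulti, coeff_derivMulti, smul_smul,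
    show δ + (β + γ) = δ + β + γ by abel]
  congr 1
  rw [← Finset.prod_mul_distrib]
  apply Finset.prod_congr rfl
  intro i _
  rw [Finsupp.add_apply, Finsupp.add_apply,
    show β i + γ i + δ i = γ i + β i + δ i by omega]
  exact desc_helper (γ i) (β i) (δ i)

lemma contract_monomial (β : Fin r →₀ ℕ) (c : K) (f : MvPolynomial (Fin r) K) :
    contract (monomial β c) f = c • derivMulti β f := by
  unfold contract
  rw [MvPolynomial.support_monomial]
  split_ifs with h
  · simp [h]
  · rw [Finset.sum_singleton, coeff_monomial, if_pos rfl]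

lemma contract_add_left (D E f : MvPolynomial (Fin r) K) :
    contract (D + E) f = contract D f + contract E f := by
  rw [contract_eq_sum, contract_eq_sum, contract_eq_sum, AddMonoidAlgebra.coeff_add]
  exact Finsupp.sum_add_index' (fun β => zero_smul K _) (fun β b₁ b₂ => add_smul b₁ b₂ _)

lemma derivMulti_zero_left (f : MvPolynomial (Fin r) K) :
    derivMulti (0 : Fin r →₀ ℕ) f = f := by
  ext γ
  simp [coeff_derivMulti]

lemma contract_zero_left (f : MvPolynomial (Fin r) K) :
    contract 0 f = 0 := by
  rw [contract_eq_sum, AddMonoidAlgebra.coeff_zero]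
  exact Finsupp.sum_zero_index

lemma contract_add_right (D f g : MvPolynomial (Fin r) K) :
    contract D (f + g) = contract D f + contract D g := by
  unfold contract
  rw [← Finset.sum_add_distrib]
  exact Finset.sum_congr rfl fun β _ => by rw [derivMulti_add_right, smul_add]

lemma contract_smul_right (c : K) (D f : MvPolynomial (Fin r) K) :
    contract D (c • f) = c • contract D f := by
  unfold contract
  rw [Finset.smul_sum]
  exact Finset.sum_congr rfl fun β _ => by rw [derivMulti_smul_right, smul_comm]

lemma contract_zero_right (D : MvPolynomial (Fin r) K) :
    contract D (0 : MvPolynomial (Fin r) K) = 0 := by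
  unfold contract
  exact Finset.sum_eq_zero fun β _ => by rw [derivMulti_zero_right, smul_zero]

lemma contract_mul (D E f : MvPolynomial (Fin r) K) :
    contract (D * E) f = contract D (contract E f) := by
  induction D using MvPolynomial.induction_on' with
  | add p q hp hq => rw [add_mul, contract_add_left, contract_add_left, hp, hq]
  | monomial β b =>
    induction E using MvPolynomial.induction_on' with
    | add p q hp hq =>
      rw [mul_add, contract_add_left, contract_add_left, contract_add_right, hp, hq]
    | monomial δ c =>
      rw [monomial_mul, contract_monomial, contract_monomial, contract_monomial,
        derivMulti_smul_right, derivMulti_comp, smul_smul, add_comm β δ]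

lemma contract_C (c : K) (f : MvPolynomial (Fin r) K) :
    contract (C c) f = c • f := by
  rw [MvPolynomial.C_apply, contract_monomial, derivMulti_zero_left]

lemma contract_smul_left (c : K) (D f : MvPolynomial (Fin r) K) :
    contract (c • D) f = c • contract D f := by
  rw [MvPolynomial.smul_eq_C_mul, contract_mul, contract_C]

lemma degree_eq_sum_univ (β : Fin r →₀ ℕ) : β.degree = ∑ i : Fin r, β i := by
  unfold Finsupp.degree
  exact Finset.sum_subset (Finset.subset_univ _)
    (fun i _ h => Finsupp.notMem_support_iff.mp h)

lemma degree_add (β γ : Fin r →₀ ℕ) : (β + γ).degree = β.degree + γ.degree := by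
  simp [degree_eq_sum_univ, Finset.sum_add_distrib]

lemma degree_single_one (i : Fin r) : (Finsupp.single i 1 : Fin r →₀ ℕ).degree = 1 := by
  simp [degree_eq_sum_univ, Finsupp.single_apply]

lemma eq_single_of_degree_one {β : Fin r →₀ ℕ} (h : β.degree = 1) :
    ∃ i, β = Finsupp.single i 1 := by
  have hne : β ≠ 0 := by
    intro h0
    rw [h0, map_zero] at h
    exact one_ne_zero h.symm
  obtain ⟨i, hi⟩ := Finsupp.support_nonempty_iff.mpr hne
  have hi1 : 1 ≤ β i := Nat.one_le_iff_ne_zero.mpr (Finsupp.mem_support_iff.mp hi)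
  refine ⟨i, ?_⟩
  ext j
  rcases eq_or_ne j i with rfl | hj
  · have := Finsupp.le_degree j β
    rw [h] at this
    simp only [Finsupp.single_eq_same]
    omega
  · have hpair : β i + β j = ∑ k ∈ ({i, j} : Finset (Fin r)), β k :=
      (Finset.sum_pair (Ne.symm hj)).symm
    have hle : ∑ k ∈ ({i, j} : Finset (Fin r)), β k ≤ ∑ k : Fin r, β k :=
      Finset.sum_le_sum_of_subset (Finset.subset_univ _)
    rw [← degree_eq_sum_univ, h] at hle
    rw [Finsupp.single_eq_of_ne' (Ne.symm hj)]
    omega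

lemma contract_isHomogeneous {D f : MvPolynomial (Fin r) K} {e d : ℕ}
    (hD : D.IsHomogeneous e) (hf : f.IsHomogeneous d) :
    (contract D f).IsHomogeneous (d - e) := by
  intro γ hγ
  rw [← degree_eq_weight_one']
  unfold contract at hγ
  rw [MvPolynomial.coeff_sum] at hγ
  obtain ⟨β, hβ, hne⟩ := Finset.exists_ne_zero_of_sum_ne_zero hγ
  rw [MvPolynomial.coeff_smul, coeff_derivMulti] at hne
  have hcf : coeff (β + γ) f ≠ 0 := by
    intro h0
    rw [h0] at hne
    simp at hne
  have h1 : (β + γ).degree = d := by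
    have := hf hcf
    rwa [← degree_eq_weight_one'] at this
  have h2 : β.degree = e := by
    have := hD (MvPolynomial.mem_support_iff.mp hβ)
    rwa [← degree_eq_weight_one'] at this
  rw [degree_add] at h1
  omega

lemma contract_eq_zero_of_lt {D f : MvPolynomial (Fin r) K} {e d : ℕ}
    (hD : D.IsHomogeneous e) (hf : f.IsHomogeneous d) (hlt : d < e) :
    contract D f = 0 := by
  unfold contract
  apply Finset.sum_eq_zero
  intro β hβ
  have h2 : β.degree = e := by
    have := hD (MvPolynomial.mem_support_iff.mp hβ)
    rwa [← degree_eq_weight_one'] at this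
  have hzero : derivMulti β f = 0 := by
    ext γ
    rw [coeff_derivMulti]
    have : coeff (β + γ) f = 0 := by
      apply hf.coeff_eq_zero
      rw [degree_add]
      omega
    simp [this]
  rw [hzero, smul_zero]

lemma X_eq_monomial (i : Fin r) :
    (X i : MvPolynomial (Fin r) K) = monomial (Finsupp.single i 1) 1 := rfl

end

section CharZ

variable [Field K] [CharZero K] {r : ℕ}

lemma eq_zero_of_contract_top {h : MvPolynomial (Fin r) K} {m : ℕ} (hh : h.IsHomogeneous m)
    (H : ∀ β : Fin r →₀ ℕ, β.degree = m → contract (monomial β 1) h = 0) : h = 0 := by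
  ext β
  rw [coeff_zero]
  rcases eq_or_ne β.degree m with hdeg | hdeg
  · have h1 := H β hdeg
    rw [contract_monomial, one_smul] at h1
    have h2 : coeff 0 (derivMulti β h) = 0 := by rw [h1, coeff_zero]
    rw [coeff_derivMulti, add_zero] at h2
    simp only [Finsupp.coe_zero, Pi.zero_apply, zero_add, Nat.descFactorial_self] at h2
    rw [nsmul_eq_mul] at h2
    rcases mul_eq_zero.mp h2 with hc | hc
    · exfalso
      rw [Nat.cast_eq_zero, Finset.prod_eq_zero_iff] at hc
      obtain ⟨i, _, hi⟩ := hc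
      exact Nat.factorial_ne_zero _ hi
    · exact hc
  · exact hh.coeff_eq_zero hdeg

lemma contract_X_of_degree_one {l : MvPolynomial (Fin r) K} (hl : l.IsHomogeneous 1)
    (i : Fin r) :
    contract (X i) l = C (coeff (Finsupp.single i 1) l) := by
  rw [X_eq_monomial, contract_monomial, one_smul]
  ext γ
  rw [coeff_derivMulti]
  rcases eq_or_ne γ 0 with rfl | hγ
  · rw [add_zero, MvPolynomial.coeff_zero_C, Finset.prod_eq_one, one_smul]
    intro j _
    simp only [Finsupp.coe_zero, Pi.zero_apply, zero_add]
    rcases eq_or_ne j i with rfl | hj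
    · simp [Finsupp.single_eq_same]
    · simp [Finsupp.single_eq_of_ne' (Ne.symm hj)]
  · have hc : coeff (Finsupp.single i 1 + γ) l = 0 := by
      apply hl.coeff_eq_zero
      rw [degree_add, degree_single_one]
      have : γ.degree ≠ 0 := fun h0 => hγ ((Finsupp.degree_eq_zero_iff γ).mp h0)
      omega
    rw [hc, smul_zero, MvPolynomial.coeff_C, if_neg (fun hcon => hγ hcon.symm)]

lemma eq_zero_of_contract_X {h : MvPolynomial (Fin r) K} (hh : h.IsHomogeneous 1)
    (H : ∀ i : Fin r, contract (X i) h = 0) : h = 0 := by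
  apply eq_zero_of_contract_top hh
  intro β hβ
  obtain ⟨i, rfl⟩ := eq_single_of_degree_one hβ
  rw [← X_eq_monomial]
  exact H i

end CharZ

noncomputable section LinMaps

variable [CommSemiring K] {r : ℕ}

/-- Contraction as a linear map in the operator argument. -/
def contractL (f : MvPolynomial (Fin r) K) :
    MvPolynomial (Fin r) K →ₗ[K] MvPolynomial (Fin r) K where
  toFun D := contract D f
  map_add' D E := contract_add_left D E f
  map_smul' c D := contract_smul_left c D f

/-- Contraction as a linear map in the polynomial argument. -/
def contractR (D : MvPolynomial (Fin r) K) :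
    MvPolynomial (Fin r) K →ₗ[K] MvPolynomial (Fin r) K where
  toFun f := contract D f
  map_add' f h := contract_add_right D f h
  map_smul' c f := contract_smul_right c D f

lemma contract_sum_left {ι : Type*} (s : Finset ι) (h : ι → MvPolynomial (Fin r) K)
    (f : MvPolynomial (Fin r) K) :
    contract (∑ x ∈ s, h x) f = ∑ x ∈ s, contract (h x) f :=
  map_sum (contractL f) h s

/-- The annihilator of `g` is an ideal. -/
def annIdeal (g : MvPolynomial (Fin r) K) : Ideal (MvPolynomial (Fin r) K) where
  carrier := {D | contract D g = 0}
  add_mem' := by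
    intro a b ha hb
    simp only [Set.mem_setOf_eq] at *
    rw [contract_add_left, ha, hb, add_zero]
  zero_mem' := contract_zero_left g
  smul_mem' := by
    intro c x hx
    simp only [Set.mem_setOf_eq, smul_eq_mul] at *
    rw [contract_mul, hx, contract_zero_right]

end LinMaps

section Factor

variable [Field K]

lemma exists_factor {V W₁ W₂ : Type*} [AddCommGroup V] [AddCommGroup W₁] [AddCommGroup W₂]
    [Module K V] [Module K W₁] [Module K W₂] (φ : V →ₗ[K] W₁) (ψ : V →ₗ[K] W₂)
    (h : LinearMap.ker φ ≤ LinearMap.ker ψ) : ∃ T : W₁ →ₗ[K] W₂, ∀ v, T (φ v) = ψ v := by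
  let q : (V ⧸ LinearMap.ker φ) →ₗ[K] W₂ := (LinearMap.ker φ).liftQ ψ h
  let e := φ.quotKerEquivRange
  let f₀ : LinearMap.range φ →ₗ[K] W₂ := q.comp e.symm.toLinearMap
  obtain ⟨T, hT⟩ := f₀.exists_extend
  refine ⟨T, fun v => ?_⟩
  have h1 : T (φ v) = f₀ ⟨φ v, LinearMap.mem_range_self φ v⟩ := by
    rw [← hT]
    rfl
  rw [h1]
  show q (e.symm ⟨φ v, LinearMap.mem_range_self φ v⟩) = ψ v
  have h2 : e.symm ⟨φ v, LinearMap.mem_range_self φ v⟩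
      = Submodule.Quotient.mk v := by
    apply e.injective
    rw [LinearEquiv.apply_symm_apply]
    exact Subtype.ext (φ.quotKerEquivRange_apply_mk v).symm
  rw [h2]
  exact Submodule.liftQ_apply _ ψ v

end Factor

section Main

variable [Field K] [CharZero K] {r d : ℕ} {f g : MvPolynomial (Fin r) K}

set_option linter.unusedSectionVars false

lemma lem_ba (hd : 1 ≤ d) (hf : f.IsHomogeneous d) (hg : g.IsHomogeneous d)
    (hb : ∀ D : MvPolynomial (Fin r) K, D.IsHomogeneous (d - 1) → contract D f = 0 →
      contract D g = 0) :
    ∀ e < d, ∀ D : MvPolynomial (Fin r) K, D.IsHomogeneous e → contract D f = 0 →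
      contract D g = 0 := by
  intro e he D hD hDf
  apply eq_zero_of_contract_top (contract_isHomogeneous hD hg)
  intro β hβ
  have hne : β ≠ 0 := by
    intro h0
    rw [h0, map_zero] at hβ
    omega
  obtain ⟨i, hi⟩ := Finsupp.support_nonempty_iff.mpr hne
  have hi1 : 1 ≤ β i := Nat.one_le_iff_ne_zero.mpr (Finsupp.mem_support_iff.mp hi)
  have hle : Finsupp.single i 1 ≤ β := by
    rw [Finsupp.single_le_iff]
    exact hi1
  have hadd : β - Finsupp.single i 1 + Finsupp.single i 1 = β := tsub_add_cancel_of_le hle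
  have hdeg' : (β - Finsupp.single i 1).degree + 1 = d - e := by
    have h2 := degree_add (β - Finsupp.single i 1) (Finsupp.single i 1)
    rw [hadd, degree_single_one] at h2
    omega
  have hmon : monomial β (1 : K) = X i * monomial (β - Finsupp.single i 1) 1 := by
    rw [X_eq_monomial, monomial_mul, one_mul,
      add_comm (Finsupp.single i 1) (β - Finsupp.single i 1), hadd]
  have hE : (monomial (β - Finsupp.single i 1) (1 : K) * D).IsHomogeneous (d - 1) := by
    have h1 : (monomial (β - Finsupp.single i 1) (1 : K)).IsHomogeneous
        (β - Finsupp.single i 1).degree := isHomogeneous_monomial _ rfl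
    have h2 := h1.mul hD
    have heq : (β - Finsupp.single i 1).degree + e = d - 1 := by omega
    rwa [heq] at h2
  have hEf : contract (monomial (β - Finsupp.single i 1) (1 : K) * D) f = 0 := by
    rw [contract_mul, hDf, contract_zero_right]
  have hEg := hb _ hE hEf
  rw [← contract_mul, hmon, mul_assoc, contract_mul, hEg, contract_zero_right]

lemma lem_db (hd : 1 ≤ d) (hf : f.IsHomogeneous d) (hg : g.IsHomogeneous d)
    (hdd : ∀ D : MvPolynomial (Fin r) K, D.IsHomogeneous (d - 1) → contract D f = 0 →
      ∀ i, contract (X i * D) g = 0) :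
    ∀ D : MvPolynomial (Fin r) K, D.IsHomogeneous (d - 1) → contract D f = 0 →
      contract D g = 0 := by
  intro D hD hDf
  have h1 : (contract D g).IsHomogeneous 1 := by
    have h2 := contract_isHomogeneous hD hg
    rwa [show d - (d - 1) = 1 by omega] at h2
  apply eq_zero_of_contract_X h1
  intro i
  rw [← contract_mul]
  exact hdd D hD hDf i

lemma lem_cd (hd : 1 ≤ d) (hf : f.IsHomogeneous d) (hg : g.IsHomogeneous d)
    (hc : ∃ A : Matrix (Fin r) (Fin r) K, ∀ i, contract (X i) g = contract (rowOp A i) f) :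
    ∀ D : MvPolynomial (Fin r) K, D.IsHomogeneous (d - 1) → contract D f = 0 →
      ∀ i, contract (X i * D) g = 0 := by
  obtain ⟨A, hA⟩ := hc
  intro D hD hDf i
  rw [mul_comm, contract_mul, hA i, ← contract_mul, mul_comm, contract_mul, hDf,
    contract_zero_right]

lemma ann_components (hf : f.IsHomogeneous d) {D : MvPolynomial (Fin r) K}
    (hDf : contract D f = 0) (e : ℕ) :
    contract (homogeneousComponent e D) f = 0 := by
  rcases le_or_gt e d with hle | hlt
  · by_cases hrange : e ∈ Finset.range (D.totalDegree + 1)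
    · have hsum : ∑ e' ∈ Finset.range (D.totalDegree + 1),
          contract (homogeneousComponent e' D) f = 0 := by
        rw [← contract_sum_left, MvPolynomial.sum_homogeneousComponent, hDf]
      have happ := congrArg (homogeneousComponent (d - e)) hsum
      rw [map_sum, map_zero, Finset.sum_eq_single_of_mem e hrange] at happ
      · rwa [homogeneousComponent_of_mem ((mem_homogeneousSubmodule _ _).mpr
          (contract_isHomogeneous (homogeneousComponent_isHomogeneous (n := e) (φ := D)) hf)),
          if_pos rfl] at happ
      · intro e' _ hne
        rcases le_or_gt e' d with hle' | hlt'
        · have hcomp := homogeneousComponent_of_mem (m := d - e)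
            ((mem_homogeneousSubmodule _ _).mpr
              (contract_isHomogeneous (homogeneousComponent_isHomogeneous (n := e') (φ := D)) hf))
          rw [if_neg (show ¬ d - e = d - e' by omega)] at hcomp
          exact hcomp
        · rw [contract_eq_zero_of_lt (homogeneousComponent_isHomogeneous (n := e') (φ := D))
            hf hlt', map_zero]
    · have h0 : homogeneousComponent e D = 0 := by
        apply MvPolynomial.homogeneousComponent_eq_zero
        simp only [Finset.mem_range] at hrange
        omega
      rw [h0, contract_zero_left]
  · exact contract_eq_zero_of_lt (homogeneousComponent_isHomogeneous (n := e) (φ := D)) hf hlt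

lemma mul_ann (hd : 1 ≤ d) (hf : f.IsHomogeneous d) (hg : g.IsHomogeneous d)
    (ha : ∀ e < d, ∀ D : MvPolynomial (Fin r) K, D.IsHomogeneous e → contract D f = 0 →
      contract D g = 0) :
    ∀ D : MvPolynomial (Fin r) K, contract D f = 0 → ∀ i, contract (X i * D) g = 0 := by
  intro D hDf i
  rw [show X i * D = ∑ e' ∈ Finset.range (D.totalDegree + 1), X i * homogeneousComponent e' D by
    rw [← Finset.mul_sum, MvPolynomial.sum_homogeneousComponent], contract_sum_left]
  apply Finset.sum_eq_zero
  intro e' _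
  rcases lt_or_ge e' d with hlt | hle
  · have h0 : contract (homogeneousComponent e' D) g = 0 :=
      ha e' hlt _ (homogeneousComponent_isHomogeneous (n := e') (φ := D))
        (ann_components hf hDf e')
    rw [contract_mul, h0, contract_zero_right]
  · exact contract_eq_zero_of_lt
      ((isHomogeneous_X K i).mul (homogeneousComponent_isHomogeneous (n := e') (φ := D))) hg
      (by omega)

lemma lem_ed (hd : 1 ≤ d) (hf : f.IsHomogeneous d) (hg : g.IsHomogeneous d)
    (hee : Ideal.span {p : MvPolynomial (Fin r) K | ∃ i, p = X i} *
        Ideal.span {D : MvPolynomial (Fin r) K | contract D f = 0} ≤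
      Ideal.span {D : MvPolynomial (Fin r) K | contract D g = 0}) :
    ∀ D : MvPolynomial (Fin r) K, D.IsHomogeneous (d - 1) → contract D f = 0 →
      ∀ i, contract (X i * D) g = 0 := by
  intro D hD hDf i
  have hmem : X i * D ∈ Ideal.span {p : MvPolynomial (Fin r) K | ∃ i, p = X i} *
      Ideal.span {D : MvPolynomial (Fin r) K | contract D f = 0} :=
    Ideal.mul_mem_mul (Ideal.subset_span ⟨i, rfl⟩) (Ideal.subset_span hDf)
  have hle : Ideal.span {D' : MvPolynomial (Fin r) K | contract D' g = 0} ≤ annIdeal g :=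
    Ideal.span_le.mpr fun x hx => hx
  exact hle (hee hmem)

lemma lem_de (hd : 1 ≤ d) (hf : f.IsHomogeneous d) (hg : g.IsHomogeneous d)
    (hdd : ∀ D : MvPolynomial (Fin r) K, D.IsHomogeneous (d - 1) → contract D f = 0 →
      ∀ i, contract (X i * D) g = 0) :
    Ideal.span {p : MvPolynomial (Fin r) K | ∃ i, p = X i} *
        Ideal.span {D : MvPolynomial (Fin r) K | contract D f = 0} ≤
      Ideal.span {D : MvPolynomial (Fin r) K | contract D g = 0} := by
  have ha := lem_ba hd hf hg (lem_db hd hf hg hdd)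
  rw [Ideal.span_mul_span]
  apply Ideal.span_le.mpr
  intro x hx
  rw [Set.mem_mul] at hx
  obtain ⟨p, ⟨i, rfl⟩, D, hDf, rfl⟩ := hx
  exact Ideal.subset_span (mul_ann hd hf hg ha D hDf i)

lemma contract_sub_right (D p q : MvPolynomial (Fin r) K) :
    contract D (p - q) = contract D p - contract D q :=
  map_sub (contractR D) p q

lemma eq_zero_of_coeff_single {h : MvPolynomial (Fin r) K} (hh : h.IsHomogeneous 1)
    (H : ∀ k : Fin r, coeff (Finsupp.single k 1) h = 0) : h = 0 := by
  ext γ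
  rw [coeff_zero]
  rcases eq_or_ne γ.degree 1 with hγ | hγ
  · obtain ⟨k, rfl⟩ := eq_single_of_degree_one hγ
    exact H k
  · exact hh.coeff_eq_zero hγ

lemma coeff_single_contract (hd : 1 ≤ d) (hf : f.IsHomogeneous d)
    (D : MvPolynomial (Fin r) K) (k : Fin r) :
    coeff (Finsupp.single k 1) (contract D f)
      = coeff (Finsupp.single k 1) (contract (homogeneousComponent (d - 1) D) f) := by
  by_cases hrange : d - 1 ∈ Finset.range (D.totalDegree + 1)
  · conv_lhs => rw [← MvPolynomial.sum_homogeneousComponent D]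
    rw [contract_sum_left, MvPolynomial.coeff_sum]
    apply Finset.sum_eq_single_of_mem (d - 1) hrange
    intro e' _ hne
    rcases le_or_gt e' d with hle' | hlt'
    · apply (contract_isHomogeneous
        (homogeneousComponent_isHomogeneous (n := e') (φ := D)) hf).coeff_eq_zero
      rw [degree_single_one]
      omega
    · rw [contract_eq_zero_of_lt (homogeneousComponent_isHomogeneous (n := e') (φ := D))
        hf hlt', coeff_zero]
  · have htot : homogeneousComponent (d - 1) D = 0 := by
      apply MvPolynomial.homogeneousComponent_eq_zero
      simp only [Finset.mem_range] at hrange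
      omega
    rw [htot, contract_zero_left, coeff_zero]
    conv_lhs => rw [← MvPolynomial.sum_homogeneousComponent D]
    rw [contract_sum_left, MvPolynomial.coeff_sum]
    apply Finset.sum_eq_zero
    intro e' he'
    simp only [Finset.mem_range, not_lt] at hrange he'
    rcases le_or_gt e' d with hle' | hlt'
    · apply (contract_isHomogeneous
        (homogeneousComponent_isHomogeneous (n := e') (φ := D)) hf).coeff_eq_zero
      rw [degree_single_one]
      omega
    · rw [contract_eq_zero_of_lt (homogeneousComponent_isHomogeneous (n := e') (φ := D))
        hf hlt', coeff_zero]

lemma lem_bc (hd : 1 ≤ d) (hf : f.IsHomogeneous d) (hg : g.IsHomogeneous d)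
    (hb : ∀ D : MvPolynomial (Fin r) K, D.IsHomogeneous (d - 1) → contract D f = 0 →
      contract D g = 0) :
    ∃ A : Matrix (Fin r) (Fin r) K, ∀ i, contract (X i) g = contract (rowOp A i) f := by
  have hcomp1 : ∀ D : MvPolynomial (Fin r) K,
      (contract (homogeneousComponent (d - 1) D) f).IsHomogeneous 1 := by
    intro D
    have h1 := contract_isHomogeneous (homogeneousComponent_isHomogeneous (n := d - 1) (φ := D)) hf
    rwa [show d - (d - 1) = 1 by omega] at h1
  set φf : MvPolynomial (Fin r) K →ₗ[K] (Fin r → K) :=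
    { toFun := fun D k => coeff (Finsupp.single k 1) (contract D f)
      map_add' := fun D E => by
        funext k
        simp only [contract_add_left, coeff_add, Pi.add_apply]
      map_smul' := fun c D => by
        funext k
        simp only [contract_smul_left, coeff_smul, Pi.smul_apply, smul_eq_mul,
          RingHom.id_apply] } with hφf
  set φg : MvPolynomial (Fin r) K →ₗ[K] (Fin r → K) :=
    { toFun := fun D k => coeff (Finsupp.single k 1) (contract D g)
      map_add' := fun D E => by
        funext k
        simp only [contract_add_left, coeff_add, Pi.add_apply]
      map_smul' := fun c D => by
        funext k
        simp only [contract_smul_left, coeff_smul, Pi.smul_apply, smul_eq_mul,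
          RingHom.id_apply] } with hφg
  have hker : LinearMap.ker φf ≤ LinearMap.ker φg := by
    intro D hD
    rw [LinearMap.mem_ker] at hD ⊢
    have hDcomp : contract (homogeneousComponent (d - 1) D) f = 0 := by
      apply eq_zero_of_coeff_single (hcomp1 D)
      intro k
      have h2 := congrFun hD k
      rw [hφf] at h2
      simp only [LinearMap.coe_mk, AddHom.coe_mk, Pi.zero_apply] at h2
      rwa [coeff_single_contract hd hf D k] at h2
    have hgcomp : contract (homogeneousComponent (d - 1) D) g = 0 :=
      hb _ (homogeneousComponent_isHomogeneous (n := d - 1) (φ := D)) hDcomp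
    funext k
    rw [hφg]
    simp only [LinearMap.coe_mk, AddHom.coe_mk, Pi.zero_apply]
    rw [coeff_single_contract hd hg D k, hgcomp, coeff_zero]
  obtain ⟨T, hT⟩ := exists_factor φf φg hker
  have hTlin : ∀ (v : Fin r → K) (i : Fin r),
      T v i = ∑ k : Fin r, T (Pi.single k 1) i * v k := by
    intro v i
    conv_lhs => rw [← Finset.univ_sum_single v, map_sum]
    rw [Finset.sum_apply]
    apply Finset.sum_congr rfl
    intro k _
    have h3 : Pi.single k (v k) = v k • (Pi.single k (1 : K) : Fin r → K) := by
      funext j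
      rcases eq_or_ne j k with rfl | hj
      · simp
      · simp [Pi.single_eq_of_ne hj]
    rw [h3, map_smul, Pi.smul_apply, smul_eq_mul, mul_comm]
  refine ⟨Matrix.of fun i k => T (Pi.single k 1) i, fun i => ?_⟩
  rw [← sub_eq_zero]
  have hrowhom : (rowOp (Matrix.of fun i k => T (Pi.single k 1) i) i).IsHomogeneous 1 := by
    apply IsHomogeneous.sum
    intro k _
    exact (mem_homogeneousSubmodule _ _).mp
      ((homogeneousSubmodule (Fin r) K 1).smul_mem _
        ((mem_homogeneousSubmodule _ _).mpr (isHomogeneous_X K k)))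
  apply eq_zero_of_contract_top (m := d - 1)
    ((contract_isHomogeneous (isHomogeneous_X K i) hg).sub (contract_isHomogeneous hrowhom hf))
  intro β hβ
  have hmg1 : (contract (monomial β (1 : K)) g).IsHomogeneous 1 := by
    have h4 := contract_isHomogeneous (isHomogeneous_monomial (1 : K) hβ) hg
    rwa [show d - (d - 1) = 1 by omega] at h4
  have hmf1 : (contract (monomial β (1 : K)) f).IsHomogeneous 1 := by
    have h4 := contract_isHomogeneous (isHomogeneous_monomial (1 : K) hβ) hf
    rwa [show d - (d - 1) = 1 by omega] at h4
  rw [contract_sub_right]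
  have ht1 : contract (monomial β (1 : K)) (contract (X i) g)
      = C (coeff (Finsupp.single i 1) (contract (monomial β (1 : K)) g)) := by
    rw [← contract_mul, mul_comm, contract_mul, contract_X_of_degree_one hmg1 i]
  have ht2 : contract (monomial β (1 : K))
      (contract (rowOp (Matrix.of fun i k => T (Pi.single k 1) i) i) f)
      = C (T (φf (monomial β 1)) i) := by
    have hrow : contract (rowOp (Matrix.of fun i k => T (Pi.single k 1) i) i) f
        = ∑ k : Fin r, (Matrix.of fun i k => T (Pi.single k 1) i) i k • contract (X k) f := by
      unfold rowOp
      rw [contract_sum_left]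
      exact Finset.sum_congr rfl fun k _ => contract_smul_left _ _ _
    rw [hrow]
    calc contract (monomial β (1 : K))
          (∑ k : Fin r, (Matrix.of fun i k => T (Pi.single k 1) i) i k • contract (X k) f)
        = ∑ k : Fin r, contract (monomial β (1 : K))
            ((Matrix.of fun i k => T (Pi.single k 1) i) i k • contract (X k) f) :=
          map_sum (contractR (monomial β (1 : K))) _ _
      _ = ∑ k : Fin r, (Matrix.of fun i k => T (Pi.single k 1) i) i k •
            C (coeff (Finsupp.single k 1) (contract (monomial β (1 : K)) f)) := by
          refine Finset.sum_congr rfl fun k _ => ?_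
          rw [contract_smul_right, ← contract_mul, mul_comm, contract_mul,
            contract_X_of_degree_one hmf1 k]
      _ = ∑ k : Fin r, C ((Matrix.of fun i k => T (Pi.single k 1) i) i k *
            coeff (Finsupp.single k 1) (contract (monomial β (1 : K)) f)) := by
          refine Finset.sum_congr rfl fun k _ => ?_
          rw [MvPolynomial.smul_eq_C_mul, ← C_mul]
      _ = C (∑ k : Fin r, (Matrix.of fun i k => T (Pi.single k 1) i) i k *
            coeff (Finsupp.single k 1) (contract (monomial β (1 : K)) f)) := by
          rw [← map_sum]
      _ = C (T (φf (monomial β 1)) i) :=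
          congrArg C (hTlin (φf (monomial β 1)) i).symm
  have h6 : T (φf (monomial β 1)) i
      = coeff (Finsupp.single i 1) (contract (monomial β (1 : K)) g) :=
    congrFun (hT (monomial β 1)) i
  rw [ht1, ht2, h6, sub_self]

end Main

/-- Lemma 2.7. For `d ≥ 1` and `f, g ∈ ℛ_d`, the following are
equivalent: (a) `ann_R(f)_e ⊆ ann_R(g)_e` for all `e < d`;
(b) `ann_R(f)_{d−1} ⊆ ann_R(g)_{d−1}`;
(c) there is `A ∈ Mat_r(K)` with `∂g = A∂f`;
(d) `R_1·ann_R(f)_{d−1} ⊆ ann_R(g)_d`;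
(e) `𝔪_R·ann_R(f) ⊆ ann_R(g)`. -/
theorem ann_inclusion_tfae {K : Type*} [Field K] [CharZero K] {r d : ℕ} (hd : 1 ≤ d)
    (f g : MvPolynomial (Fin r) K) (hf : f.IsHomogeneous d) (hg : g.IsHomogeneous d) :
    ((∀ e < d, ∀ D : MvPolynomial (Fin r) K, D.IsHomogeneous e → contract D f = 0 →
        contract D g = 0) ↔
      (∀ D : MvPolynomial (Fin r) K, D.IsHomogeneous (d - 1) → contract D f = 0 →
        contract D g = 0)) ∧
    ((∀ D : MvPolynomial (Fin r) K, D.IsHomogeneous (d - 1) → contract D f = 0 →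
        contract D g = 0) ↔
      (∃ A : Matrix (Fin r) (Fin r) K, ∀ i, contract (X i) g = contract (rowOp A i) f)) ∧
    ((∃ A : Matrix (Fin r) (Fin r) K, ∀ i, contract (X i) g = contract (rowOp A i) f) ↔
      (∀ D : MvPolynomial (Fin r) K, D.IsHomogeneous (d - 1) → contract D f = 0 →
        ∀ i, contract (X i * D) g = 0)) ∧
    ((∀ D : MvPolynomial (Fin r) K, D.IsHomogeneous (d - 1) → contract D f = 0 →
        ∀ i, contract (X i * D) g = 0) ↔
      Ideal.span {p : MvPolynomial (Fin r) K | ∃ i, p = X i} *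
          Ideal.span {D : MvPolynomial (Fin r) K | contract D f = 0} ≤
        Ideal.span {D : MvPolynomial (Fin r) K | contract D g = 0}) := by
  refine ⟨⟨fun ha => ha (d - 1) (by omega), fun hb => lem_ba hd hf hg hb⟩,
    ⟨fun hb => lem_bc hd hf hg hb, fun hc => lem_db hd hf hg (lem_cd hd hf hg hc)⟩,
    ⟨fun hc => lem_cd hd hf hg hc, fun hdd => lem_bc hd hf hg (lem_db hd hf hg hdd)⟩,
    fun hdd => lem_de hd hf hg hdd, fun hee => lem_ed hd hf hg hee⟩

end Kleppe
end

section
/- Let M ⊆ Mat_r(K) be a subset containing the identity matrix I, and let M' be the K-subalgebra of Mat_r(K) generated by M. Then I(M') = Ǐ(M). -/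
open MvPolynomial

namespace Kleppe

/-- The determinantal ideal `I(M) = Σ_{A ∈ M} I_2(∂ A∂)`. -/
noncomputable def IM {K : Type*} [CommRing K] {r : ℕ} (M : Set (Matrix (Fin r) (Fin r) K)) :
    Ideal (MvPolynomial (Fin r) K) :=
  Ideal.span {p | ∃ A ∈ M, ∃ i j : Fin r, p = X i * rowOp A j - X j * rowOp A i}

/-- The determinantal ideal `Ǐ(M) = Σ_{A,B ∈ M} I_2(A∂ B∂)`. -/
noncomputable def IcheckM {K : Type*} [CommRing K] {r : ℕ} (M : Set (Matrix (Fin r) (Fin r) K)) :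
    Ideal (MvPolynomial (Fin r) K) :=
  Ideal.span {p | ∃ A ∈ M, ∃ B ∈ M, ∃ i j : Fin r,
    p = rowOp A i * rowOp B j - rowOp A j * rowOp B i}


section Aux

variable {K : Type*} [Field K] {r : ℕ}

/-- `g(A)_{ij} = ∂_i (A∂)_j − ∂_j (A∂)_i`. -/
noncomputable def gg (A : Matrix (Fin r) (Fin r) K) (i j : Fin r) : MvPolynomial (Fin r) K :=
  X i * rowOp A j - X j * rowOp A i

/-- `f(A,B)_{ij} = (A∂)_i (B∂)_j − (A∂)_j (B∂)_i`. -/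
noncomputable def ff (A B : Matrix (Fin r) (Fin r) K) (i j : Fin r) : MvPolynomial (Fin r) K :=
  rowOp A i * rowOp B j - rowOp A j * rowOp B i

/-- `c(A,B)_{ij} = ((AB−BA)∂)_i ∂_j`. -/
noncomputable def cc (A B : Matrix (Fin r) (Fin r) K) (i j : Fin r) : MvPolynomial (Fin r) K :=
  (rowOp (A * B) i - rowOp (B * A) i) * X j

lemma rowOp_one (i : Fin r) : rowOp (1 : Matrix (Fin r) (Fin r) K) i = X i := by
  simp [rowOp, Matrix.one_apply]

lemma rowOp_mul (A B : Matrix (Fin r) (Fin r) K) (i : Fin r) :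
    rowOp (A * B) i = ∑ k, A i k • rowOp B k := by
  simp only [rowOp, Matrix.mul_apply, Finset.sum_smul, mul_smul, Finset.smul_sum]
  rw [Finset.sum_comm]

lemma rowOp_add (A B : Matrix (Fin r) (Fin r) K) (i : Fin r) :
    rowOp (A + B) i = rowOp A i + rowOp B i := by
  simp [rowOp, Matrix.add_apply, add_smul, Finset.sum_add_distrib]

lemma rowOp_smul (a : K) (A : Matrix (Fin r) (Fin r) K) (i : Fin r) :
    rowOp (a • A) i = a • rowOp A i := by
  simp [rowOp, Matrix.smul_apply, mul_smul, Finset.smul_sum]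

lemma rowOp_zero (i : Fin r) : rowOp (0 : Matrix (Fin r) (Fin r) K) i = 0 := by
  simp [rowOp]

lemma hq (A B : Matrix (Fin r) (Fin r) K) (q : MvPolynomial (Fin r) K) (j : Fin r) :
    (∑ k, A j k • (q * rowOp B k)) = q * rowOp (A * B) j := by
  rw [rowOp_mul, Finset.mul_sum]
  simp [mul_smul_comm]

lemma hq' (A B : Matrix (Fin r) (Fin r) K) (q : MvPolynomial (Fin r) K) (j : Fin r) :
    (∑ k, A j k • (rowOp B k * q)) = rowOp (A * B) j * q := by
  rw [rowOp_mul, Finset.sum_mul]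
  simp [smul_mul_assoc]

lemma hx (A : Matrix (Fin r) (Fin r) K) (q : MvPolynomial (Fin r) K) (j : Fin r) :
    (∑ k, A j k • (X k * q)) = rowOp A j * q := by
  rw [rowOp, Finset.sum_mul]
  simp [smul_mul_assoc]

lemma hx' (A : Matrix (Fin r) (Fin r) K) (q : MvPolynomial (Fin r) K) (j : Fin r) :
    (∑ k, A j k • (q * X k)) = q * rowOp A j := by
  rw [rowOp, Finset.mul_sum]
  simp [mul_smul_comm]

lemma I2 (A B : Matrix (Fin r) (Fin r) K) (i j : Fin r) :
    ff A B i j = (∑ k, A i k • gg B k j) - (∑ k, A j k • gg B k i) - gg (A * B) i j := by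
  simp only [ff, gg, smul_sub, Finset.sum_sub_distrib, hq, hx]
  ring

lemma I3 (A B : Matrix (Fin r) (Fin r) K) (i j : Fin r) :
    cc A B i j = ff A B i j - (∑ k, A i k • gg B k j) + (∑ k, B i k • gg A k j) := by
  simp only [cc, ff, gg, smul_sub, Finset.sum_sub_distrib, hq, hx, sub_mul]
  ring

lemma I4 (u v : Matrix (Fin r) (Fin r) K) (i j : Fin r) :
    gg (u * v) i j = (∑ k, u j k • gg v i k) + (∑ k, v i k • gg u k j) + cc v u i j := by
  simp only [gg, cc, smul_sub, Finset.sum_sub_distrib, hq, hx, sub_mul]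
  ring

lemma I5 (u v w : Matrix (Fin r) (Fin r) K) (i j : Fin r) :
    cc (u * v) w i j = (∑ k, u i k • cc v w k j) + (∑ k, v j k • cc u w i k)
      - (∑ k, ((u * w) i k - (w * u) i k) • gg v k j) := by
  simp only [cc, gg, sub_mul, smul_sub, sub_smul, Finset.sum_sub_distrib, hq, hq', hx, hx',
    mul_assoc]
  ring

lemma cc_symm (A B : Matrix (Fin r) (Fin r) K) (i j : Fin r) : cc B A i j = -cc A B i j := by
  simp only [cc]
  ring

variable {M : Set (Matrix (Fin r) (Fin r) K)}

lemma smul_mem_ideal {J : Ideal (MvPolynomial (Fin r) K)} {p : MvPolynomial (Fin r) K}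
    (a : K) (hp : p ∈ J) : a • p ∈ J := by
  rw [MvPolynomial.smul_eq_C_mul]
  exact J.mul_mem_left _ hp

lemma ff_mem {A B : Matrix (Fin r) (Fin r) K} (hA : A ∈ M) (hB : B ∈ M) (i j : Fin r) :
    ff A B i j ∈ IcheckM M :=
  Ideal.subset_span ⟨A, hA, B, hB, i, j, rfl⟩

lemma gg_mem_of_mem (h1 : (1 : Matrix (Fin r) (Fin r) K) ∈ M)
    {A : Matrix (Fin r) (Fin r) K} (hA : A ∈ M) (i j : Fin r) : gg A i j ∈ IcheckM M := by
  have e : gg A i j = ff (1 : Matrix (Fin r) (Fin r) K) A i j := by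
    simp [gg, ff, rowOp_one]
  rw [e]
  exact ff_mem h1 hA i j

lemma cc_of {A B : Matrix (Fin r) (Fin r) K}
    (hf : ∀ i j, ff A B i j ∈ IcheckM M) (hA : ∀ i j, gg A i j ∈ IcheckM M)
    (hB : ∀ i j, gg B i j ∈ IcheckM M) : ∀ i j, cc A B i j ∈ IcheckM M := by
  intro i j
  rw [I3]
  exact add_mem
    (sub_mem (hf i j) (Ideal.sum_mem _ fun k _ => smul_mem_ideal _ (hB k j)))
    (Ideal.sum_mem _ fun k _ => smul_mem_ideal _ (hA k j))

/-- Main induction: every word in the multiplicative closure of `M` has its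
`g`-matrix entries in `Ǐ(M)`. -/
lemma gg_mem_of_closure (h1 : (1 : Matrix (Fin r) (Fin r) K) ∈ M) :
    ∀ u ∈ Submonoid.closure M, ∀ i j, gg u i j ∈ IcheckM M := by
  set J := IcheckM M with hJ
  let Q : Matrix (Fin r) (Fin r) K → Prop := fun u =>
    (∀ i j, gg u i j ∈ J) ∧ ∀ x ∈ M, ∀ i j, cc u x i j ∈ J
  suffices h : ∀ u ∈ Submonoid.closure M, Q u ∧ ∀ v, Q v → ∀ i j, cc u v i j ∈ J by
    intro u hu
    exact (h u hu).1.1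
  intro u hu
  induction hu using Submonoid.closure_induction with
  | mem x hx =>
      refine ⟨⟨gg_mem_of_mem h1 hx, fun y hy => cc_of (ff_mem hx hy)
        (gg_mem_of_mem h1 hx) (gg_mem_of_mem h1 hy)⟩, ?_⟩
      intro v hv i j
      rw [show cc x v i j = -cc v x i j from cc_symm v x i j]
      exact neg_mem (hv.2 x hx i j)
  | one =>
      have hg : ∀ i j, gg (1 : Matrix (Fin r) (Fin r) K) i j ∈ J := by
        intro i j
        have : gg (1 : Matrix (Fin r) (Fin r) K) i j = 0 := by
          simp [gg, rowOp_one, mul_comm]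
        rw [this]; exact zero_mem _
      have hc : ∀ v : Matrix (Fin r) (Fin r) K, ∀ i j, cc (1 : Matrix (Fin r) (Fin r) K) v i j ∈ J := by
        intro v i j
        have : cc (1 : Matrix (Fin r) (Fin r) K) v i j = 0 := by simp [cc]
        rw [this]; exact zero_mem _
      exact ⟨⟨hg, fun x _ => hc x⟩, fun v _ => hc v⟩
  | mul x y hxm hym ihx ihy =>
      have hgx := ihx.1.1
      have hgy := ihy.1.1
      have hccmul : ∀ w : Matrix (Fin r) (Fin r) K,
          (∀ i j, cc x w i j ∈ J) → (∀ i j, cc y w i j ∈ J) → ∀ i j, cc (x * y) w i j ∈ J := by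
        intro w hxw hyw i j
        rw [I5]
        refine sub_mem (add_mem (Ideal.sum_mem _ fun k _ => smul_mem_ideal _ (hyw k j))
          (Ideal.sum_mem _ fun k _ => smul_mem_ideal _ (hxw i k)))
          (Ideal.sum_mem _ fun k _ => smul_mem_ideal _ (hgy k j))
      refine ⟨⟨?_, fun z hz => hccmul z (ihx.1.2 z hz) (ihy.1.2 z hz)⟩,
        fun v hv => hccmul v (ihx.2 v hv) (ihy.2 v hv)⟩
      intro i j
      rw [I4]
      refine add_mem (add_mem (Ideal.sum_mem _ fun k _ => smul_mem_ideal _ (hgy i k))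
        (Ideal.sum_mem _ fun k _ => smul_mem_ideal _ (hgx k j)))
        (ihy.2 x ihx.1 i j)

lemma gg_mem_of_adjoin (h1 : (1 : Matrix (Fin r) (Fin r) K) ∈ M) :
    ∀ u ∈ Algebra.adjoin K M, ∀ i j, gg u i j ∈ IcheckM M := by
  intro u hu
  have hu' : u ∈ Submodule.span K ((Submonoid.closure M : Submonoid _) : Set _) := by
    rw [← Algebra.adjoin_eq_span]
    exact hu
  clear hu
  induction hu' using Submodule.span_induction with
  | mem x hx => exact gg_mem_of_closure h1 x hx
  | zero =>
      intro i j
      have : gg (0 : Matrix (Fin r) (Fin r) K) i j = 0 := by simp [gg, rowOp_zero]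
      rw [this]; exact zero_mem _
  | add x y hx hy ihx ihy =>
      intro i j
      have : gg (x + y) i j = gg x i j + gg y i j := by
        simp only [gg, rowOp_add]; ring
      rw [this]; exact add_mem (ihx i j) (ihy i j)
  | smul a x hx ih =>
      intro i j
      have : gg (a • x) i j = a • gg x i j := by
        simp only [gg, rowOp_smul, smul_sub, mul_smul_comm]
      rw [this]; exact smul_mem_ideal _ (ih i j)

end Aux

/-- Proposition 2.20. If `I ∈ M ⊆ Mat_r(K)`, and `M'` is the
`K`-subalgebra of `Mat_r(K)` generated by `M`, then `I(M') = Ǐ(M)`. -/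
theorem IM_adjoin_eq_IcheckM {K : Type*} [Field K] {r : ℕ}
    (M : Set (Matrix (Fin r) (Fin r) K)) (hM : (1 : Matrix (Fin r) (Fin r) K) ∈ M) :
    IM ((Algebra.adjoin K M : Subalgebra K (Matrix (Fin r) (Fin r) K)) : Set _) =
      IcheckM M := by
  apply le_antisymm
  · rw [IM, Ideal.span_le]
    rintro p ⟨A, hA, i, j, rfl⟩
    exact gg_mem_of_adjoin hM A hA i j
  · rw [IcheckM, Ideal.span_le]
    rintro p ⟨A, hA, B, hB, i, j, rfl⟩
    have hA' : A ∈ Algebra.adjoin K M := Algebra.subset_adjoin hA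
    have hB' : B ∈ Algebra.adjoin K M := Algebra.subset_adjoin hB
    have gmem : ∀ C, C ∈ Algebra.adjoin K M → ∀ k l, gg C k l ∈
        IM ((Algebra.adjoin K M : Subalgebra K (Matrix (Fin r) (Fin r) K)) : Set _) :=
      fun C hC k l => Ideal.subset_span ⟨C, hC, k, l, rfl⟩
    have e : rowOp A i * rowOp B j - rowOp A j * rowOp B i = ff A B i j := rfl
    rw [e, I2]
    exact sub_mem (sub_mem (Ideal.sum_mem _ fun k _ => smul_mem_ideal _ (gmem B hB' k j))
      (Ideal.sum_mem _ fun k _ => smul_mem_ideal _ (gmem B hB' k i)))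
      (gmem (A * B) (mul_mem hA' hB') i j)

end Kleppe
end
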